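/- arXiv:1203.1538 — 7 statements merged into one kernel-verified Lean document; each statement's English description precedes it below -/
import Mathlib

section
/- Let A be an M×N real matrix, y ∈ ℝ^M, and suppose x* is the unique minimizer of ‖x‖₁ subject to Ax = y. Then for every constant M₀ > 0 there exists t > 0 (depending only on A, y, M₀) such that for all x ∈ ℝ^N with Ax = y and 0 < ‖x − x*‖₂ ≤ M₀, one has ‖x‖₁ − ‖x*‖₁ ≥ t‖x − x*‖₂. -/
open Matrix BigOperators

noncomputable def l1 {N : ℕ} (x : Fin N → ℝ) : ℝ := ∑ i, |x i|

noncomputable def l2 {N : ℕ} (x : Fin N → ℝ) : ℝ := Real.sqrt (∑ i, (x i) ^ 2)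

noncomputable def sgn {N : ℕ} (x : Fin N → ℝ) : Fin N → ℝ := fun i => Real.sign (x i)

noncomputable def Pmat {M N : ℕ} (A : Matrix (Fin M) (Fin N) ℝ) : Matrix (Fin N) (Fin N) ℝ :=
  1 - Aᵀ * (A * Aᵀ)⁻¹ * A

noncomputable def Dfun {N : ℕ} (xs u : Fin N → ℝ) : ℝ :=
  ∑ i, (if xs i = 0 then |u i| else Real.sign (xs i) * u i)

lemma l1_nonneg {N : ℕ} (x : Fin N → ℝ) : 0 ≤ l1 x :=
  Finset.sum_nonneg fun i _ => abs_nonneg _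

lemma abs_le_l1 {N : ℕ} (x : Fin N → ℝ) (i : Fin N) : |x i| ≤ l1 x :=
  Finset.single_le_sum (fun j _ => abs_nonneg (x j)) (Finset.mem_univ i)

lemma Dfun_le {N : ℕ} (xs v : Fin N → ℝ) : Dfun xs v ≤ l1 (xs + v) - l1 xs := by
  unfold l1 Dfun
  rw [← Finset.sum_sub_distrib]
  apply Finset.sum_le_sum
  intro i _
  by_cases h : xs i = 0
  · simp [h]
  · simp only [if_neg h, Pi.add_apply]
    rcases lt_or_gt_of_ne h with hlt | hgt
    · rw [Real.sign_of_neg hlt, abs_of_neg hlt]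
      have := neg_abs_le (xs i + v i)
      linarith
    · rw [Real.sign_of_pos hgt, abs_of_pos hgt]
      have := le_abs_self (xs i + v i)
      linarith

lemma Dfun_smul {N : ℕ} (xs u : Fin N → ℝ) (c : ℝ) (hc : 0 ≤ c) :
    Dfun xs (c • u) = c * Dfun xs u := by
  unfold Dfun
  rw [Finset.mul_sum]
  apply Finset.sum_congr rfl
  intro i _
  by_cases h : xs i = 0
  · simp [h, abs_mul, abs_of_nonneg hc]
  · simp only [if_neg h, Pi.smul_apply, smul_eq_mul]; ring

lemma l1_eq_of_small {N : ℕ} (xs u : Fin N → ℝ) (ε : ℝ) (hε : 0 < ε)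
    (hsmall : ∀ i, xs i ≠ 0 → ε * |u i| < |xs i|) :
    l1 (xs + ε • u) = l1 xs + ε * Dfun xs u := by
  unfold l1 Dfun
  rw [Finset.mul_sum, ← Finset.sum_add_distrib]
  apply Finset.sum_congr rfl
  intro i _
  by_cases h : xs i = 0
  · simp [h, abs_mul, abs_of_pos hε]
  · simp only [if_neg h, Pi.add_apply, Pi.smul_apply, smul_eq_mul]
    have hb := hsmall i h
    have h1 : ε * u i ≤ ε * |u i| := by
      have := le_abs_self (u i); nlinarith
    have h2 : -(ε * |u i|) ≤ ε * u i := by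
      have := neg_abs_le (u i); nlinarith
    rcases lt_or_gt_of_ne h with hlt | hgt
    · rw [Real.sign_of_neg hlt, abs_of_neg hlt] at *
      rw [abs_of_neg (by linarith)]
      ring
    · rw [Real.sign_of_pos hgt, abs_of_pos hgt] at *
      rw [abs_of_pos (by linarith)]
      ring

lemma Dfun_pos {M N : ℕ} (A : Matrix (Fin M) (Fin N) ℝ) (y : Fin M → ℝ)
    (xs : Fin N → ℝ) (hxs : A *ᵥ xs = y)
    (huniq : ∀ x : Fin N → ℝ, A *ᵥ x = y → x ≠ xs → l1 xs < l1 x)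
    (u : Fin N → ℝ) (hu0 : A *ᵥ u = 0) (hune : u ≠ 0) : 0 < Dfun xs u := by
  classical
  set s : Finset (Fin N) := Finset.univ.filter (fun i => xs i ≠ 0) with hs
  set c : ℝ := if h : s.Nonempty then s.inf' h (fun i => |xs i|) else 1 with hc
  have hcpos : 0 < c := by
    by_cases h : s.Nonempty
    · rw [hc, dif_pos h, Finset.lt_inf'_iff]
      intro i hi
      have : xs i ≠ 0 := by simpa [hs] using (Finset.mem_filter.mp hi).2
      exact abs_pos.mpr this
    · rw [hc, dif_neg h]; norm_num
  have hcle : ∀ i, xs i ≠ 0 → c ≤ |xs i| := by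
    intro i hi
    have hmem : i ∈ s := by simp [hs, hi]
    have hne : s.Nonempty := ⟨i, hmem⟩
    rw [hc, dif_pos hne]
    exact Finset.inf'_le _ hmem
  have hl1u : 0 ≤ l1 u := l1_nonneg u
  set ε : ℝ := c / (1 + l1 u) with hεdef
  have hden : 0 < 1 + l1 u := by linarith
  have hεpos : 0 < ε := div_pos hcpos hden
  have hεc : ε * (1 + l1 u) = c := div_mul_cancel₀ c (ne_of_gt hden)
  have hsmall : ∀ i, xs i ≠ 0 → ε * |u i| < |xs i| := by
    intro i hi
    have h1 : ε * |u i| ≤ ε * l1 u := by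
      have := abs_le_l1 u i; nlinarith
    have h2 : ε * l1 u < c := by nlinarith
    exact lt_of_le_of_lt h1 (lt_of_lt_of_le h2 (hcle i hi))
  have heq := l1_eq_of_small xs u ε hεpos hsmall
  have hAx : A *ᵥ (xs + ε • u) = y := by
    rw [mulVec_add, mulVec_smul, hu0, hxs]
    simp
  have hne' : xs + ε • u ≠ xs := by
    intro h
    apply hune
    have : ε • u = 0 := by
      have := congrArg (fun z => z - xs) h
      simpa [add_sub_cancel_left] using this
    rcases smul_eq_zero.mp this with h' | h'
    · exact absurd h' (ne_of_gt hεpos)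
    · exact h'
  have := huniq _ hAx hne'
  rw [heq] at this
  nlinarith

lemma l2_smul {N : ℕ} (c : ℝ) (x : Fin N → ℝ) : l2 (c • x) = |c| * l2 x := by
  unfold l2
  rw [← Real.sqrt_sq_eq_abs, ← Real.sqrt_mul (sq_nonneg c), Finset.mul_sum]
  congr 1
  apply Finset.sum_congr rfl
  intro i _
  simp [Pi.smul_apply, smul_eq_mul]
  ring

lemma l2_zero {N : ℕ} : l2 (0 : Fin N → ℝ) = 0 := by
  unfold l2; simp

lemma continuous_l2 {N : ℕ} : Continuous (l2 (N := N)) := by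
  unfold l2
  exact Real.continuous_sqrt.comp (continuous_finset_sum _ fun i _ => (continuous_apply i).pow 2)

lemma continuous_Dfun {N : ℕ} (xs : Fin N → ℝ) : Continuous (Dfun xs) := by
  unfold Dfun
  apply continuous_finset_sum
  intro i _
  by_cases h : xs i = 0
  · simp only [if_pos h]
    exact (continuous_apply i).abs
  · simp only [if_neg h]
    exact continuous_const.mul (continuous_apply i)

theorem stmt0 {M N : ℕ} (A : Matrix (Fin M) (Fin N) ℝ) (y : Fin M → ℝ)
    (xs : Fin N → ℝ) (hxs : A *ᵥ xs = y)
    (huniq : ∀ x : Fin N → ℝ, A *ᵥ x = y → x ≠ xs → l1 xs < l1 x) :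
    ∀ M₀ : ℝ, 0 < M₀ → ∃ t : ℝ, 0 < t ∧
      ∀ x : Fin N → ℝ, A *ᵥ x = y → 0 < l2 (x - xs) → l2 (x - xs) ≤ M₀ →
        l1 x - l1 xs ≥ t * l2 (x - xs) := by
  intro M₀ _
  classical
  set S : Set (Fin N → ℝ) := {u | A *ᵥ u = 0 ∧ l2 u = 1} with hS
  have hcontA : Continuous fun u : Fin N → ℝ => A *ᵥ u := by
    have := (Matrix.mulVecLin A).continuous_of_finiteDimensional
    exact this
  have hSclosed : IsClosed S := by
    have h1 : IsClosed ((fun u : Fin N → ℝ => A *ᵥ u) ⁻¹' {0}) :=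
      isClosed_singleton.preimage hcontA
    have h2 : IsClosed ((l2 (N := N)) ⁻¹' ({1} : Set ℝ)) := isClosed_singleton.preimage continuous_l2
    have : S = (fun u : Fin N → ℝ => A *ᵥ u) ⁻¹' {0} ∩ l2 ⁻¹' {1} := by
      ext u; simp [hS]
    rw [this]; exact h1.inter h2
  have hSbdd : S ⊆ Metric.closedBall 0 1 := by
    intro u hu
    rw [Metric.mem_closedBall, dist_zero_right]
    rw [pi_norm_le_iff_of_nonneg zero_le_one]
    intro i
    have hsum : ∑ j, (u j) ^ 2 = 1 := by
      have h1 := hu.2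
      unfold l2 at h1
      have hnn : 0 ≤ ∑ j, (u j) ^ 2 := Finset.sum_nonneg fun j _ => sq_nonneg _
      nlinarith [Real.sq_sqrt hnn]
    have : (u i) ^ 2 ≤ 1 := by
      rw [← hsum]
      exact Finset.single_le_sum (fun j _ => sq_nonneg (u j)) (Finset.mem_univ i)
    rw [Real.norm_eq_abs]
    nlinarith [abs_nonneg (u i), sq_abs (u i)]
  have hSnorm : ∀ x : Fin N → ℝ, A *ᵥ x = y → 0 < l2 (x - xs) →
      (l2 (x - xs))⁻¹ • (x - xs) ∈ S := by
    intro x hAx hpos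
    constructor
    · rw [mulVec_smul, sub_eq_add_neg, mulVec_add, mulVec_neg, hAx, hxs]
      simp
    · rw [l2_smul, abs_of_pos (inv_pos.mpr hpos)]
      field_simp
  by_cases hne : S.Nonempty
  · have hK : IsCompact S :=
      Metric.isCompact_of_isClosed_isBounded hSclosed
        (Metric.isBounded_closedBall.subset hSbdd)
    obtain ⟨u₀, hu₀S, hu₀min'⟩ := hK.exists_isMinOn hne (continuous_Dfun xs).continuousOn
    have hu₀min : ∀ v ∈ S, Dfun xs u₀ ≤ Dfun xs v := fun v hv => hu₀min' hv
    have hu₀ne : u₀ ≠ 0 := by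
      intro h
      have h2 := hu₀S.2
      rw [h, l2_zero] at h2
      exact one_ne_zero h2.symm
    have ht : 0 < Dfun xs u₀ := Dfun_pos A y xs hxs huniq u₀ hu₀S.1 hu₀ne
    refine ⟨Dfun xs u₀, ht, ?_⟩
    intro x hAx hpos _
    set r := l2 (x - xs) with hr
    set v := r⁻¹ • (x - xs) with hv
    have hvS : v ∈ S := hSnorm x hAx hpos
    have hxv : x - xs = r • v := by
      rw [hv, smul_inv_smul₀ (ne_of_gt hpos)]
    have h1 : Dfun xs (x - xs) = r * Dfun xs v := by
      rw [hxv, Dfun_smul _ _ _ (le_of_lt hpos)]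
    have h2 : Dfun xs u₀ ≤ Dfun xs v := hu₀min v hvS
    have h3 : Dfun xs (x - xs) ≤ l1 x - l1 xs := by
      have := Dfun_le xs (x - xs)
      rwa [add_sub_cancel] at this
    rw [ge_iff_le, h1] at *
    calc Dfun xs u₀ * r ≤ Dfun xs v * r := by nlinarith
    _ = r * Dfun xs v := by ring
    _ ≤ l1 x - l1 xs := by rw [← h1]; exact h3
  · refine ⟨1, one_pos, ?_⟩
    intro x hAx hpos _
    exact absurd ⟨_, hSnorm x hAx hpos⟩ hne
end

section
/- Suppose x* is the unique minimizer of ‖x‖₁ subject to Ax = y, and t > 0 satisfies ‖x‖₁ − ‖x*‖₁ ≥ t‖x − x*‖₂ for all x in the solution space with ‖x − x*‖₂ ≤ M₀. Let x_{n+1} = xₙ − γP sgn(xₙ) with Axₙ = y and ‖xₙ − x*‖₂ ≤ M₀. Then for any μ > 1, if ‖xₙ − x*‖₂ ≥ γ·(μ/(2t))·max_x ‖P sgn(x)‖₂², then ‖x_{n+1} − x*‖₂² ≤ ‖xₙ − x*‖₂² − γ²(μ−1)·max_x ‖P sgn(x)‖₂². -/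
open Matrix BigOperators

lemma my_sign_mul_self (x : ℝ) : Real.sign x * x = |x| := by
  rcases lt_trichotomy x 0 with h | h | h
  · rw [Real.sign_of_neg h, abs_of_neg h]; ring
  · simp [h]
  · rw [Real.sign_of_pos h, abs_of_pos h]; ring

lemma sign_mul_le (x z : ℝ) : Real.sign x * z ≤ |z| := by
  calc Real.sign x * z ≤ |Real.sign x * z| := le_abs_self _
    _ = |Real.sign x| * |z| := abs_mul _ _
    _ ≤ 1 * |z| := by
        apply mul_le_mul_of_nonneg_right _ (abs_nonneg z)
        rcases lt_trichotomy x 0 with h | h | h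
        · rw [Real.sign_of_neg h]; norm_num
        · simp [h]
        · rw [Real.sign_of_pos h]; norm_num
    _ = |z| := one_mul _

theorem stmt4 {M N : ℕ} (A : Matrix (Fin M) (Fin N) ℝ) (hinv : IsUnit (A * Aᵀ))
    (y : Fin M → ℝ) (xs : Fin N → ℝ) (hxs : A *ᵥ xs = y)
    (huniq : ∀ x : Fin N → ℝ, A *ᵥ x = y → x ≠ xs → l1 xs < l1 x)
    (M₀ t : ℝ) (hM₀ : 0 < M₀) (ht : 0 < t)
    (hgrow : ∀ x : Fin N → ℝ, A *ᵥ x = y → l2 (x - xs) ≤ M₀ →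
      l1 x - l1 xs ≥ t * l2 (x - xs))
    (C : ℝ) (hC : IsGreatest (Set.range fun z : Fin N → ℝ => (l2 (Pmat A *ᵥ sgn z)) ^ 2) C)
    (γ μ : ℝ) (hγ : 0 < γ) (hμ : 1 < μ)
    (xn xn1 : Fin N → ℝ) (hrec : xn1 = xn - γ • (Pmat A *ᵥ sgn xn))
    (hfeas : A *ᵥ xn = y) (hbound : l2 (xn - xs) ≤ M₀)
    (hfar : l2 (xn - xs) ≥ γ * (μ / (2 * t)) * C) :
    (l2 (xn1 - xs)) ^ 2 ≤ (l2 (xn - xs)) ^ 2 - γ ^ 2 * (μ - 1) * C := by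
  have hsq : ∀ (w : Fin N → ℝ), (l2 w) ^ 2 = ∑ i, (w i) ^ 2 := by
    intro w
    exact Real.sq_sqrt (by positivity)
  set d := xn - xs with hd
  set s := sgn xn with hs
  set v := Pmat A *ᵥ s with hv
  -- A d = 0
  have hAd : A *ᵥ d = 0 := by
    rw [hd, Matrix.mulVec_sub, hfeas, hxs, sub_self]
  -- v ⬝ᵥ d = s ⬝ᵥ d
  have hvd : v ⬝ᵥ d = s ⬝ᵥ d := by
    rw [hv, Pmat, Matrix.sub_mulVec, Matrix.one_mulVec, sub_dotProduct]
    have : (Aᵀ * (A * Aᵀ)⁻¹ * A) *ᵥ s ⬝ᵥ d = 0 := by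
      have h1 : (Aᵀ * (A * Aᵀ)⁻¹ * A) *ᵥ s = Aᵀ *ᵥ ((A * Aᵀ)⁻¹ *ᵥ (A *ᵥ s)) := by
        simp [Matrix.mulVec_mulVec, Matrix.mul_assoc]
      rw [h1, Matrix.mulVec_transpose, ← Matrix.dotProduct_mulVec, hAd,
        dotProduct_zero]
    rw [this, sub_zero]
  -- s ⬝ᵥ d ≥ l1 xn - l1 xs
  have hsd : s ⬝ᵥ d ≥ l1 xn - l1 xs := by
    rw [dotProduct, l1, l1, ← Finset.sum_sub_distrib]
    apply Finset.sum_le_sum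
    intro i _
    have h1 : s i * xn i = |xn i| := my_sign_mul_self (xn i)
    have h2 : s i * xs i ≤ |xs i| := sign_mul_le (xn i) (xs i)
    have : d i = xn i - xs i := rfl
    rw [this]
    nlinarith
  -- growth
  have hg : l1 xn - l1 xs ≥ t * l2 d := hgrow xn hfeas hbound
  -- C bounds
  have hCv : (l2 v) ^ 2 ≤ C := hC.2 ⟨xn, rfl⟩
  have hC0 : 0 ≤ C := by
    obtain ⟨z, hz⟩ := hC.1
    rw [← hz]; positivity
  -- expand
  have hexp : (l2 (xn1 - xs)) ^ 2 = (l2 d) ^ 2 - 2 * γ * (v ⬝ᵥ d) + γ ^ 2 * (l2 v) ^ 2 := by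
    rw [hsq, hsq, hsq, dotProduct]
    have : xn1 - xs = d - γ • v := by rw [hrec, hd]; abel
    rw [this]
    rw [Finset.mul_sum, Finset.mul_sum, ← Finset.sum_sub_distrib, ← Finset.sum_add_distrib]
    apply Finset.sum_congr rfl
    intro i _
    simp only [Pi.sub_apply, Pi.smul_apply, smul_eq_mul]
    ring
  have hfar' : t * l2 d ≥ γ * μ * C / 2 := by
    have := mul_le_mul_of_nonneg_left hfar (le_of_lt ht)
    calc γ * μ * C / 2 = t * (γ * (μ / (2 * t)) * C) := by field_simp
      _ ≤ t * l2 d := this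
  have hsd' : v ⬝ᵥ d ≥ γ * μ * C / 2 := by
    rw [hvd]; linarith
  rw [hexp]
  nlinarith [sq_nonneg γ, hγ.le]
end

section
/- Under the hypotheses of the convergence theorem (unique ℓ¹ minimizer x*, linear-growth constant t, ZAP recursion x_{n+1} = xₙ − γP sgn(xₙ) with Axₙ = y and ‖xₙ − x*‖₂ ≤ M₀), the one-step deviation satisfies ‖x_{n+1} − x*‖₂² ≤ ‖xₙ − x*‖₂² − 2γt‖xₙ − x*‖₂ + γ²‖P sgn(xₙ)‖₂². -/
open Matrix BigOperators

lemma sign_mul_self_eq_abs (a : ℝ) : Real.sign a * a = |a| := by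
  rcases lt_trichotomy a 0 with h | h | h
  · rw [Real.sign_of_neg h, abs_of_neg h]; ring
  · simp [h]
  · rw [Real.sign_of_pos h, abs_of_pos h]; ring

lemma sign_mul_le_abs (a b : ℝ) : Real.sign a * b ≤ |b| := by
  calc Real.sign a * b ≤ |Real.sign a * b| := le_abs_self _
    _ = |Real.sign a| * |b| := abs_mul _ _
    _ ≤ 1 * |b| := by
        apply mul_le_mul_of_nonneg_right _ (abs_nonneg b)
        rcases Real.sign_apply_eq a with h | h | h <;> rw [h] <;> norm_num
    _ = |b| := one_mul _

theorem stmt5 {M N : ℕ} (A : Matrix (Fin M) (Fin N) ℝ) (hinv : IsUnit (A * Aᵀ))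
    (y : Fin M → ℝ) (xs : Fin N → ℝ) (hxs : A *ᵥ xs = y)
    (huniq : ∀ x : Fin N → ℝ, A *ᵥ x = y → x ≠ xs → l1 xs < l1 x)
    (M₀ t : ℝ) (hM₀ : 0 < M₀) (ht : 0 < t)
    (hgrow : ∀ x : Fin N → ℝ, A *ᵥ x = y → l2 (x - xs) ≤ M₀ →
      l1 x - l1 xs ≥ t * l2 (x - xs))
    (γ : ℝ) (hγ : 0 < γ)
    (xn xn1 : Fin N → ℝ) (hrec : xn1 = xn - γ • (Pmat A *ᵥ sgn xn))
    (hfeas : A *ᵥ xn = y) (hbound : l2 (xn - xs) ≤ M₀) :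
    (l2 (xn1 - xs)) ^ 2 ≤
      (l2 (xn - xs)) ^ 2 - 2 * γ * t * l2 (xn - xs) + γ ^ 2 * (l2 (Pmat A *ᵥ sgn xn)) ^ 2 := by
  have hsq : ∀ u : Fin N → ℝ, (l2 u) ^ 2 = ∑ i, (u i) ^ 2 := fun u =>
    Real.sq_sqrt (Finset.sum_nonneg fun i _ => sq_nonneg _)
  set v := xn - xs with hv
  set s := sgn xn with hs
  set w := Pmat A *ᵥ s with hw
  have hAv : A *ᵥ v = 0 := by
    simp [hv, Matrix.mulVec_sub, hfeas, hxs]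
  have hPv : Pmat A *ᵥ v = v := by
    simp [Pmat, Matrix.sub_mulVec, Matrix.one_mulVec, ← Matrix.mulVec_mulVec, hAv]
  have hPsym : (Pmat A)ᵀ = Pmat A := by
    simp [Pmat, Matrix.transpose_sub, Matrix.transpose_mul, Matrix.transpose_nonsing_inv,
      Matrix.mul_assoc]
  have h1 : w ⬝ᵥ v = s ⬝ᵥ v := by
    rw [hw, dotProduct_comm, Matrix.dotProduct_mulVec, ← Matrix.mulVec_transpose,
      hPsym, hPv, dotProduct_comm]
  have h2 : l1 xn - l1 xs ≤ s ⬝ᵥ v := by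
    rw [l1, l1, ← Finset.sum_sub_distrib, dotProduct]
    apply Finset.sum_le_sum
    intro i _
    have e1 : s i * v i = Real.sign (xn i) * xn i - Real.sign (xn i) * xs i := by
      simp [hs, hv, sgn]; ring
    rw [e1, sign_mul_self_eq_abs]
    have := sign_mul_le_abs (xn i) (xs i)
    linarith
  have h3 := hgrow xn hfeas hbound
  have hkey : t * l2 v ≤ w ⬝ᵥ v := by rw [h1]; linarith
  have hexp : (l2 (xn1 - xs)) ^ 2 = (l2 v) ^ 2 - 2 * γ * (w ⬝ᵥ v) + γ ^ 2 * (l2 w) ^ 2 := by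
    rw [hsq, hsq, hsq]
    have e : xn1 - xs = fun i => v i - γ * w i := by
      funext i
      simp [hrec, hv]
      ring
    rw [e, dotProduct]
    rw [Finset.mul_sum, Finset.mul_sum, ← Finset.sum_sub_distrib, ← Finset.sum_add_distrib]
    apply Finset.sum_congr rfl
    intro i _
    ring
  rw [hexp]
  have h2γ : 2 * γ * (t * l2 v) ≤ 2 * γ * (w ⬝ᵥ v) :=
    mul_le_mul_of_nonneg_left hkey (by linarith)
  nlinarith [hsq w]
end

section
/- Let x* be the unique minimizer of ‖x‖₁ over the affine space {x : Ax = y}. Define G(u) = u_Iᵀ sgn(x*) + ‖u_{I^c}‖₁ on the compact set {u : ‖u‖₂ = 1, Au = 0}, where I = supp(x*). If this set is nonempty, then G is continuous and attains a positive minimum on it. -/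
open Matrix BigOperators

lemma l2_bound {N : ℕ} (u : Fin N → ℝ) (h : l2 u = 1) (i : Fin N) : |u i| ≤ 1 := by
  have h1 : ∑ j, (u j) ^ 2 = 1 := by
    have hnn : (0:ℝ) ≤ ∑ j, (u j) ^ 2 := Finset.sum_nonneg fun j _ => sq_nonneg _
    have := congrArg (fun r => r ^ 2) h
    simpa [l2, Real.sq_sqrt hnn] using this
  have h2 : (u i) ^ 2 ≤ 1 :=
    h1 ▸ Finset.single_le_sum (fun j _ => sq_nonneg (u j)) (Finset.mem_univ i)
  nlinarith [abs_nonneg (u i), sq_abs (u i)]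

theorem stmt10 {M N : ℕ} (A : Matrix (Fin M) (Fin N) ℝ) (y : Fin M → ℝ)
    (xs : Fin N → ℝ) (hxs : A *ᵥ xs = y)
    (huniq : ∀ x : Fin N → ℝ, A *ᵥ x = y → x ≠ xs → l1 xs < l1 x) :
    let G : (Fin N → ℝ) → ℝ := fun u =>
      (fun k => if xs k ≠ 0 then u k else 0) ⬝ᵥ sgn xs +
        l1 (u - fun k => if xs k ≠ 0 then u k else 0)
    let S : Set (Fin N → ℝ) := {u | l2 u = 1 ∧ A *ᵥ u = 0}
    S.Nonempty →
      Continuous G ∧ ∃ m : ℝ, 0 < m ∧ (∀ u ∈ S, m ≤ G u) ∧ ∃ u ∈ S, G u = m := by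
  intro G S hne
  have hG : Continuous G := by
    unfold G
    apply Continuous.add
    · simp only [dotProduct]
      apply continuous_finset_sum
      intro k _
      by_cases h : xs k ≠ 0
      · simp only [if_pos h]; fun_prop
      · simp only [if_neg h]; fun_prop
    · unfold l1
      apply continuous_finset_sum
      intro k _
      simp only [Pi.sub_apply]
      by_cases h : xs k ≠ 0
      · simp only [if_pos h]; fun_prop
      · simp only [if_neg h]; fun_prop
  refine ⟨hG, ?_⟩
  have hl2c : Continuous fun u : Fin N → ℝ => l2 u := by
    unfold l2
    exact Real.continuous_sqrt.comp (by fun_prop)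
  have hmv : Continuous fun u : Fin N → ℝ => A *ᵥ u := by
    have := (Matrix.mulVecLin A).continuous_of_finiteDimensional
    exact this
  have hSclosed : IsClosed S := by
    have : S = (fun u => l2 u) ⁻¹' {1} ∩ (fun u => A *ᵥ u) ⁻¹' {0} := rfl
    rw [this]
    exact (isClosed_singleton.preimage hl2c).inter (isClosed_singleton.preimage hmv)
  have hSbdd : Bornology.IsBounded S := by
    apply Metric.isBounded_closedBall (x := (0 : Fin N → ℝ)) (r := 1) |>.subset
    intro u hu
    rw [Metric.mem_closedBall, dist_zero_right]
    rw [pi_norm_le_iff_of_nonneg zero_le_one]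
    intro i
    simpa using l2_bound u hu.1 i
  have hScompact : IsCompact S := Metric.isCompact_of_isClosed_isBounded hSclosed hSbdd
  obtain ⟨u₀, hu₀S, hmin⟩ := hScompact.exists_isMinOn hne hG.continuousOn
  refine ⟨G u₀, ?_, fun u hu => hmin hu, u₀, hu₀S, rfl⟩
  by_contra hle
  push_neg at hle
  obtain ⟨hl2u, hAu⟩ := hu₀S
  have hub : ∀ i, |u₀ i| ≤ 1 := l2_bound u₀ hl2u
  have hune : u₀ ≠ 0 := by
    intro h
    rw [h] at hl2u
    simp [l2] at hl2u
  classical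
  set F := Finset.univ.filter (fun k => xs k ≠ 0) with hF
  set t : ℝ := if h : F.Nonempty then F.inf' h (fun k => |xs k|) else 1 with ht
  have ht0 : 0 < t := by
    rw [ht]
    split
    · next h =>
      refine (Finset.lt_inf'_iff h).mpr ?_
      intro k hk
      rw [hF, Finset.mem_filter] at hk
      exact abs_pos.mpr hk.2
    · exact one_pos
  have htle : ∀ k, xs k ≠ 0 → t ≤ |xs k| := by
    intro k hk
    have hkF : k ∈ F := by simp [hF, hk]
    have hne' : F.Nonempty := ⟨k, hkF⟩
    rw [ht, dif_pos hne']
    exact Finset.inf'_le _ hkF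
  have key : ∀ k, |xs k + t * u₀ k| =
      |xs k| + t * ((if xs k ≠ 0 then u₀ k else 0) * Real.sign (xs k)
        + |u₀ k - if xs k ≠ 0 then u₀ k else 0|) := by
    intro k
    by_cases hk : xs k ≠ 0
    · simp only [if_pos hk, sub_self, abs_zero, add_zero]
      have hb : t * |u₀ k| ≤ |xs k| := by
        calc t * |u₀ k| ≤ t * 1 := by nlinarith [hub k, abs_nonneg (u₀ k)]
        _ = t := mul_one t
        _ ≤ |xs k| := htle k hk
      rcases lt_or_gt_of_ne hk with hneg | hpos
      · rw [Real.sign_of_neg hneg]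
        have h1 : xs k + t * u₀ k ≤ 0 := by
          nlinarith [le_abs_self (u₀ k), abs_of_neg hneg]
        rw [abs_of_nonpos h1, abs_of_neg hneg]
        ring
      · rw [Real.sign_of_pos hpos]
        have h1 : 0 ≤ xs k + t * u₀ k := by
          nlinarith [neg_abs_le (u₀ k), abs_of_pos hpos]
        rw [abs_of_nonneg h1, abs_of_pos hpos]
        ring
    · push_neg at hk
      simp [hk, abs_mul, abs_of_pos ht0]
  have hsum : l1 (fun k => xs k + t * u₀ k) = l1 xs + t * G u₀ := by
    unfold G
    unfold l1
    simp only [dotProduct, Pi.sub_apply]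
    calc (∑ k, |xs k + t * u₀ k|)
        = ∑ k, (|xs k| + t * ((if xs k ≠ 0 then u₀ k else 0) * Real.sign (xs k)
            + |u₀ k - if xs k ≠ 0 then u₀ k else 0|)) :=
          Finset.sum_congr rfl fun k _ => key k
      _ = (∑ k, |xs k|) + ∑ k, t * ((if xs k ≠ 0 then u₀ k else 0) * Real.sign (xs k)
            + |u₀ k - if xs k ≠ 0 then u₀ k else 0|) := Finset.sum_add_distrib
      _ = (∑ k, |xs k|) + t * ∑ k, ((if xs k ≠ 0 then u₀ k else 0) * Real.sign (xs k)
            + |u₀ k - if xs k ≠ 0 then u₀ k else 0|) := by rw [← Finset.mul_sum]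
      _ = (∑ k, |xs k|) + t * ((∑ k, (if xs k ≠ 0 then u₀ k else 0) * Real.sign (xs k))
            + ∑ k, |u₀ k - if xs k ≠ 0 then u₀ k else 0|) := by
          rw [Finset.sum_add_distrib]
      _ = _ := by simp [sgn]
  have hxfeas : A *ᵥ (fun k => xs k + t * u₀ k) = y := by
    have h' : (fun k => xs k + t * u₀ k) = xs + t • u₀ := by
      funext k; simp [mul_comm]
    rw [h', mulVec_add, mulVec_smul, hxs, hAu, smul_zero, add_zero]
  have hxne : (fun k => xs k + t * u₀ k) ≠ xs := by
    intro h
    apply hune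
    funext i
    have := congrFun h i
    have h2 : t * u₀ i = 0 := by linarith
    rcases mul_eq_zero.mp h2 with h3 | h3
    · exact absurd h3 (ne_of_gt ht0)
    · simpa using h3
  have := huniq _ hxfeas hxne
  rw [hsum] at this
  nlinarith
end

section
/- Let t be any constant satisfying ‖x‖₁ − ‖x*‖₁ ≥ t‖x − x*‖₂ for all x with Ax = y and 0 < ‖x − x*‖₂ ≤ M₀ (with x* the unique ℓ¹ minimizer, and assuming such x exists). Then t ≤ max_{x ∈ ℝ^N} ‖P sgn(x)‖₂ ≤ √N, where P = I − Aᵀ(AAᵀ)⁻¹A. -/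
open Matrix BigOperators

lemma l2_nonneg {N : ℕ} (x : Fin N → ℝ) : 0 ≤ l2 x := Real.sqrt_nonneg _

lemma l2_sq {N : ℕ} (x : Fin N → ℝ) : l2 x ^ 2 = x ⬝ᵥ x := by
  rw [l2, Real.sq_sqrt (by positivity), dotProduct]
  simp [sq]

lemma cs {N : ℕ} (u v : Fin N → ℝ) : u ⬝ᵥ v ≤ l2 u * l2 v := by
  have h := Finset.sum_mul_sq_le_sq_mul_sq Finset.univ u v
  refine (le_abs_self _).trans ?_
  rw [← Real.sqrt_sq_eq_abs, l2, l2, ← Real.sqrt_mul (by positivity)]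
  exact Real.sqrt_le_sqrt h

lemma Pmat_symm {M N : ℕ} (A : Matrix (Fin M) (Fin N) ℝ) : (Pmat A)ᵀ = Pmat A := by
  have h : ((A * Aᵀ)⁻¹)ᵀ = (A * Aᵀ)⁻¹ := by
    rw [Matrix.transpose_nonsing_inv, transpose_mul, transpose_transpose]
  simp [Pmat, transpose_sub, transpose_mul, h, Matrix.mul_assoc]

lemma Pmat_idem {M N : ℕ} (A : Matrix (Fin M) (Fin N) ℝ) (hinv : IsUnit (A * Aᵀ)) :
    Pmat A * Pmat A = Pmat A := by
  have hdet : IsUnit (A * Aᵀ).det := (Matrix.isUnit_iff_isUnit_det _).mp hinv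
  have h1 : (A * Aᵀ)⁻¹ * (A * Aᵀ) = 1 := Matrix.nonsing_inv_mul _ hdet
  have key : Aᵀ * (A * Aᵀ)⁻¹ * A * (Aᵀ * (A * Aᵀ)⁻¹ * A) = Aᵀ * (A * Aᵀ)⁻¹ * A := by
    calc Aᵀ * (A * Aᵀ)⁻¹ * A * (Aᵀ * (A * Aᵀ)⁻¹ * A)
        = Aᵀ * ((A * Aᵀ)⁻¹ * (A * Aᵀ) * ((A * Aᵀ)⁻¹ * A)) := by
          simp only [Matrix.mul_assoc]
      _ = Aᵀ * (A * Aᵀ)⁻¹ * A := by rw [h1, Matrix.one_mul, Matrix.mul_assoc]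
  simp only [Pmat, Matrix.sub_mul, Matrix.mul_sub, Matrix.one_mul, Matrix.mul_one, key]
  abel

lemma Pmat_mulVec_eq_vecMul {M N : ℕ} (A : Matrix (Fin M) (Fin N) ℝ) (v : Fin N → ℝ) :
    Pmat A *ᵥ v = v ᵥ* Pmat A := by
  conv_rhs => rw [← Pmat_symm A]
  rw [Matrix.vecMul_transpose]

lemma l2_Pmat_le {M N : ℕ} (A : Matrix (Fin M) (Fin N) ℝ) (hinv : IsUnit (A * Aᵀ))
    (w : Fin N → ℝ) : l2 (Pmat A *ᵥ w) ≤ l2 w := by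
  set p := Pmat A *ᵥ w with hp
  have key : p ⬝ᵥ p = w ⬝ᵥ p := by
    calc p ⬝ᵥ p = (w ᵥ* Pmat A) ⬝ᵥ (Pmat A *ᵥ w) := by
          rw [hp, ← Pmat_mulVec_eq_vecMul]
      _ = w ⬝ᵥ (Pmat A *ᵥ (Pmat A *ᵥ w)) := (Matrix.dotProduct_mulVec _ _ _).symm
      _ = w ⬝ᵥ ((Pmat A * Pmat A) *ᵥ w) := by rw [Matrix.mulVec_mulVec]
      _ = w ⬝ᵥ p := by rw [Pmat_idem A hinv, hp]
  rcases eq_or_lt_of_le (l2_nonneg p) with h0 | h0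
  · rw [← h0]; exact l2_nonneg w
  · have hle : l2 p * l2 p ≤ l2 w * l2 p := by
      calc l2 p * l2 p = p ⬝ᵥ p := by rw [← sq, l2_sq]
        _ = w ⬝ᵥ p := key
        _ ≤ l2 w * l2 p := cs w p
    exact le_of_mul_le_mul_right hle h0

lemma l2_sgn_le {N : ℕ} (z : Fin N → ℝ) : l2 (sgn z) ≤ Real.sqrt N := by
  rw [l2]
  apply Real.sqrt_le_sqrt
  calc (∑ i, (sgn z i) ^ 2) ≤ ∑ _i : Fin N, (1 : ℝ) := by
        apply Finset.sum_le_sum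
        intro i _
        rw [sq_le_one_iff_abs_le_one]
        rcases lt_trichotomy (z i) 0 with h | h | h <;>
          simp [sgn, Real.sign_of_neg, Real.sign_of_pos, h, Real.sign_zero]
    _ = N := by simp

theorem stmt11 {M N : ℕ} (A : Matrix (Fin M) (Fin N) ℝ) (hinv : IsUnit (A * Aᵀ))
    (y : Fin M → ℝ) (xs : Fin N → ℝ) (hxs : A *ᵥ xs = y)
    (huniq : ∀ x : Fin N → ℝ, A *ᵥ x = y → x ≠ xs → l1 xs < l1 x)
    (M₀ t : ℝ) (hM₀ : 0 < M₀)
    (hex : ∃ x : Fin N → ℝ, A *ᵥ x = y ∧ 0 < l2 (x - xs) ∧ l2 (x - xs) ≤ M₀)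
    (hgrow : ∀ x : Fin N → ℝ, A *ᵥ x = y → 0 < l2 (x - xs) → l2 (x - xs) ≤ M₀ →
      l1 x - l1 xs ≥ t * l2 (x - xs))
    (Cmax : ℝ) (hC : IsGreatest (Set.range fun z : Fin N → ℝ => l2 (Pmat A *ᵥ sgn z)) Cmax) :
    t ≤ Cmax ∧ Cmax ≤ Real.sqrt N := by
  constructor
  · -- t ≤ Cmax
    obtain ⟨x, hx, hpos, hle⟩ := hex
    set v : Fin N → ℝ := x - xs with hv
    have hker : A *ᵥ v = 0 := by
      rw [hv, Matrix.mulVec_sub, hx, hxs, sub_self]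
    -- (1) l1 x - l1 xs ≤ v ⬝ᵥ sgn x
    have h1 : l1 x - l1 xs ≤ v ⬝ᵥ sgn x := by
      rw [l1, l1, ← Finset.sum_sub_distrib, dotProduct]
      apply Finset.sum_le_sum
      intro i _
      have hxi : x i * Real.sign (x i) = |x i| := by
        rcases lt_trichotomy (x i) 0 with h | h | h <;>
          simp [Real.sign_of_neg, Real.sign_of_pos, h, abs_of_neg, abs_of_pos]
      have hxsi : xs i * Real.sign (x i) ≤ |xs i| := by
        have hs : |Real.sign (x i)| ≤ 1 := by
          rcases lt_trichotomy (x i) 0 with h | h | h <;>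
            simp [Real.sign_of_neg, Real.sign_of_pos, h]
        calc xs i * Real.sign (x i) ≤ |xs i * Real.sign (x i)| := le_abs_self _
          _ = |xs i| * |Real.sign (x i)| := abs_mul _ _
          _ ≤ |xs i| * 1 := by nlinarith [abs_nonneg (xs i)]
          _ = |xs i| := mul_one _
      have : v i * sgn x i = x i * Real.sign (x i) - xs i * Real.sign (x i) := by
        simp [hv, sgn, sub_mul]
      rw [this, hxi]
      linarith
    -- (2) v ⬝ᵥ sgn x = v ⬝ᵥ (Pmat A *ᵥ sgn x)
    have hPv : Pmat A *ᵥ v = v := by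
      rw [Pmat, Matrix.sub_mulVec, Matrix.one_mulVec, ← Matrix.mulVec_mulVec,
        ← Matrix.mulVec_mulVec, hker]
      simp
    have h2 : v ⬝ᵥ sgn x = v ⬝ᵥ (Pmat A *ᵥ sgn x) := by
      calc v ⬝ᵥ sgn x = (v ᵥ* Pmat A) ⬝ᵥ sgn x := by
            rw [← Pmat_mulVec_eq_vecMul, hPv]
        _ = v ⬝ᵥ (Pmat A *ᵥ sgn x) := (Matrix.dotProduct_mulVec _ _ _).symm
    -- (3) Cauchy-Schwarz and bound by Cmax
    have h3 : v ⬝ᵥ (Pmat A *ᵥ sgn x) ≤ l2 v * Cmax := by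
      calc v ⬝ᵥ (Pmat A *ᵥ sgn x) ≤ l2 v * l2 (Pmat A *ᵥ sgn x) := cs _ _
        _ ≤ l2 v * Cmax := by
            apply mul_le_mul_of_nonneg_left _ (l2_nonneg v)
            exact hC.2 ⟨x, rfl⟩
    have hg := hgrow x hx hpos hle
    have : t * l2 v ≤ l2 v * Cmax := by
      calc t * l2 v ≤ l1 x - l1 xs := hg
        _ ≤ v ⬝ᵥ sgn x := h1
        _ = v ⬝ᵥ (Pmat A *ᵥ sgn x) := h2
        _ ≤ l2 v * Cmax := h3
    rw [mul_comm (l2 v) Cmax] at this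
    exact le_of_mul_le_mul_right this hpos
  · -- Cmax ≤ √N
    obtain ⟨z, hz⟩ := hC.1
    rw [← hz]
    exact (l2_Pmat_le A hinv (sgn z)).trans (l2_sgn_le z)
end

section
/- Let a, b, t, γ > 0 with μ' > 1 and b = (μ'/(2t))·C where C = max_x ‖P sgn(x)‖₂². If a sequence satisfies s_{n+1}² = sₙ² − 2γt·sₙ + γ²C and sₙ ≥ γb, then s_{n+1} < sₙ − γt(1 − 1/μ'). -/
open Matrix BigOperators

theorem stmt12 (t γ C b μ' sn sn1 : ℝ)
    (ht : 0 < t) (hγ : 0 < γ) (hCpos : 0 < C) (ht2 : t ^ 2 ≤ C)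
    (hμ : 1 < μ') (hb : b = μ' / (2 * t) * C)
    (hsn1 : sn1 ^ 2 = sn ^ 2 - 2 * γ * t * sn + γ ^ 2 * C)
    (hsn1nonneg : 0 ≤ sn1) (hge : sn ≥ γ * b) :
    sn1 < sn - γ * t * (1 - 1 / μ') := by
  have hμ0 : (0:ℝ) < μ' := by linarith
  have hinv1 : 1 / μ' < 1 := by rw [div_lt_one hμ0]; linarith
  have hinv : 0 < 1 / μ' := by positivity
  have hμinv : μ' * (1 / μ') = 1 := by field_simp
  have hge' : 2 * t * sn ≥ γ * (μ' * C) := by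
    rw [hb] at hge
    have h := mul_le_mul_of_nonneg_left hge (by positivity : (0:ℝ) ≤ 2 * t)
    calc 2 * t * sn ≥ 2 * t * (γ * (μ' / (2 * t) * C)) := h
      _ = γ * (μ' * C) := by field_simp
  have hR : 0 < sn - γ * t * (1 - 1 / μ') := by
    have h1 : 2 * t * sn ≥ γ * (μ' * t ^ 2) := by nlinarith [mul_le_mul_of_nonneg_left ht2 (le_of_lt (mul_pos hγ hμ0))]
    have h2 : sn ≥ γ * μ' * t / 2 := by nlinarith
    nlinarith [sq_nonneg (μ' - 1), mul_pos hγ ht, mul_pos (mul_pos hγ ht) hinv]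
  have hsq : sn1 ^ 2 < (sn - γ * t * (1 - 1 / μ')) ^ 2 := by
    have h4 : 2 * γ * t * (1 / μ') * sn ≥ γ ^ 2 * C := by
      have hmul := mul_le_mul_of_nonneg_left hge' (le_of_lt (mul_pos hγ hinv))
      calc 2 * γ * t * (1 / μ') * sn = γ * (1 / μ') * (2 * t * sn) := by ring
        _ ≥ γ * (1 / μ') * (γ * (μ' * C)) := hmul
        _ = γ ^ 2 * C * (μ' * (1 / μ')) := by ring
        _ = γ ^ 2 * C := by rw [hμinv]; ring
    have hpos : 0 < 1 - 1 / μ' := by linarith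
    have h5 : 0 < (γ * t * (1 - 1 / μ')) ^ 2 := by positivity
    nlinarith
  nlinarith [hsq, hR, hsn1nonneg]
end

section
/- Let A ∈ ℝ^{M×N} satisfy the restricted isometry property of order S with constant δ_S, and let x ∈ ℝ^N be p-compressible with magnitude R (0 < p < 1) with best S-sparse approximation x_S. Then ‖A(x − x_S)‖₂ ≤ √(1+δ_S)·(D_p + C_p)·R·S^{1/2−1/p}, where C_p = (1/p − 1)^{−1} and D_p = (2/p − 1)^{−1/2}. -/
open Matrix BigOperators

-- Auxiliary lemmas ------------------------------------------------------------

/-- Bernoulli-type inequality for negative exponents. -/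
lemma bern_neg {α u : ℝ} (hα : 0 < α) (hu0 : 0 < u) (hu1 : u < 1) :
    1 + α * u ≤ (1 - u) ^ (-α) := by
  rcases le_or_gt α 1 with hα1 | hα1
  · have h1 : (1 - u) ^ α ≤ 1 - α * u := by
      have := rpow_one_add_le_one_add_mul_self (s := -u) (by linarith) hα.le hα1
      have h2 : (1:ℝ) + -u = 1 - u := by ring
      rw [h2] at this; linarith
    have hαu : α * u < 1 := by nlinarith
    have hpow : 0 < (1 - u) ^ α := Real.rpow_pos_of_pos (by linarith) _
    rw [Real.rpow_neg (by linarith), inv_eq_one_div, le_div_iff₀ hpow]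
    nlinarith [mul_le_mul_of_nonneg_left h1 (by positivity : (0:ℝ) ≤ 1 + α * u), sq_nonneg (α * u)]
  · have hs : (0:ℝ) ≤ u / (1 - u) := div_nonneg hu0.le (by linarith)
    have hb := one_add_mul_self_le_rpow_one_add (s := u / (1-u)) (by linarith) hα1.le
    have h1u : (0:ℝ) < 1 - u := by linarith
    have key : 1 + u / (1 - u) = (1 - u)⁻¹ := by field_simp; ring
    rw [key] at hb
    rw [Real.rpow_neg (by linarith), ← Real.inv_rpow (by linarith)]
    refine le_trans ?_ hb
    have : u ≤ u / (1 - u) := by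
      rw [le_div_iff₀ h1u]; nlinarith
    nlinarith

lemma key_ineq {q r : ℝ} (hq : 1 < q) (hr : 1 ≤ r) :
    (q - 1) * (r + 1) ^ (-q) ≤ r ^ (1 - q) - (r + 1) ^ (1 - q) := by
  have hr0 : (0:ℝ) < r := by linarith
  have hr1 : (0:ℝ) < r + 1 := by linarith
  set u : ℝ := 1 / (r + 1) with hu
  have hu0 : 0 < u := by positivity
  have hu1 : u < 1 := by rw [hu, div_lt_one hr1]; linarith
  have hb := bern_neg (α := q - 1) (by linarith) hu0 hu1
  have hru : r = (r + 1) * (1 - u) := by rw [hu]; field_simp; ring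
  have h1u : (0:ℝ) < 1 - u := by linarith
  have hsplit : r ^ (1 - q) = (r + 1) ^ (1 - q) * (1 - u) ^ (1 - q) := by
    calc r ^ (1 - q) = ((r + 1) * (1 - u)) ^ (1 - q) := by rw [← hru]
      _ = (r + 1) ^ (1 - q) * (1 - u) ^ (1 - q) := Real.mul_rpow hr1.le h1u.le
  have hneg : (1 - u) ^ (1 - q) = (1 - u) ^ (-(q - 1)) := by congr 1; ring
  have hstep : (r + 1) ^ (1 - q) * (1 + (q - 1) * u) ≤ r ^ (1 - q) := by
    rw [hsplit, hneg]
    exact mul_le_mul_of_nonneg_left hb (Real.rpow_nonneg hr1.le _)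
  have hkey : (r + 1) ^ (1 - q) * u = (r + 1) ^ (-q) := by
    rw [hu, one_div, ← Real.rpow_neg_one (r+1), ← Real.rpow_add hr1]
    congr 1; ring
  nlinarith [hstep, hkey, Real.rpow_nonneg hr1.le (1 - q)]

lemma tail_sum {q : ℝ} (hq : 1 < q) (a b : ℕ) (ha : 1 ≤ a) :
    ∑ n ∈ Finset.Ico a b, ((n : ℝ) + 1) ^ (-q) ≤ (a : ℝ) ^ (1 - q) / (q - 1) := by
  have hq1 : (0:ℝ) < q - 1 := by linarith
  rcases le_or_gt b a with hba | hab
  · rw [Finset.Ico_eq_empty (by omega)]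
    simp only [Finset.sum_empty]
    positivity
  set f : ℕ → ℝ := fun n => (n : ℝ) ^ (1 - q) with hf
  have hstep : ∀ n ∈ Finset.Ico a b, ((n : ℝ) + 1) ^ (-q) ≤ (f n - f (n + 1)) / (q - 1) := by
    intro n hn
    rw [Finset.mem_Ico] at hn
    have hrn : (1:ℝ) ≤ (n:ℝ) := by exact_mod_cast le_trans ha hn.1
    have := key_ineq hq hrn
    rw [le_div_iff₀ hq1, mul_comm]
    simp only [hf]
    push_cast
    exact this
  calc ∑ n ∈ Finset.Ico a b, ((n : ℝ) + 1) ^ (-q)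
      ≤ ∑ n ∈ Finset.Ico a b, (f n - f (n + 1)) / (q - 1) := Finset.sum_le_sum hstep
    _ = (∑ n ∈ Finset.Ico a b, (f n - f (n + 1))) / (q - 1) := by rw [Finset.sum_div]
    _ = (f a - f b) / (q - 1) := by
        congr 1
        rw [Finset.sum_Ico_eq_sub _ hab.le, Finset.sum_range_sub' f, Finset.sum_range_sub' f]
        ring
    _ ≤ f a / (q - 1) := by
        have : 0 ≤ f b := Real.rpow_nonneg (Nat.cast_nonneg b) _
        gcongr
        linarith

lemma l2_eq_norm {N : ℕ} (v : Fin N → ℝ) :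
    l2 v = ‖(WithLp.equiv 2 (Fin N → ℝ)).symm v‖ := by
  rw [EuclideanSpace.norm_eq]
  simp [l2, sq_abs]

lemma l2_sum_le {N n : ℕ} (g : ℕ → Fin N → ℝ) :
    l2 (∑ j ∈ Finset.range n, g j) ≤ ∑ j ∈ Finset.range n, l2 (g j) := by
  simp_rw [l2_eq_norm]
  have : (WithLp.equiv 2 (Fin N → ℝ)).symm (∑ j ∈ Finset.range n, g j)
      = ∑ j ∈ Finset.range n, (WithLp.equiv 2 (Fin N → ℝ)).symm (g j) :=
    map_sum (WithLp.linearEquiv 2 ℝ (Fin N → ℝ)).symm g (Finset.range n)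
  rw [this]
  exact norm_sum_le _ _

-- Main theorem -----------------------------------------------------------------

theorem stmt19 {M N : ℕ} (A : Matrix (Fin M) (Fin N) ℝ) (x : Fin N → ℝ)
    (p R δ : ℝ) (S : ℕ)
    (hp0 : 0 < p) (hp1 : p < 1) (hR : 0 < R) (hS1 : 1 ≤ S) (hSN : S < N)
    (hδ : 0 ≤ δ)
    (hRIP : ∀ T : Finset (Fin N), T.card ≤ S → ∀ c : Fin N → ℝ,
      (∀ i ∉ T, c i = 0) →
        (1 - δ) * (l2 c) ^ 2 ≤ (l2 (A *ᵥ c)) ^ 2 ∧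
          (l2 (A *ᵥ c)) ^ 2 ≤ (1 + δ) * (l2 c) ^ 2)
    (σ : Equiv.Perm (Fin N))
    (hsort : ∀ i j : Fin N, i ≤ j → |x (σ j)| ≤ |x (σ i)|)
    (hcomp : ∀ i : Fin N, |x (σ i)| ≤ R * ((i : ℝ) + 1) ^ (-(1 / p))) :
    let xS : Fin N → ℝ := fun k => if ((σ.symm k : ℕ) < S) then x k else 0
    l2 (A *ᵥ (x - xS)) ≤
      Real.sqrt (1 + δ) * ((2 / p - 1) ^ (-(1 / 2 : ℝ)) + (1 / p - 1)⁻¹) * R *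
        (S : ℝ) ^ ((1 : ℝ) / 2 - 1 / p) := by
  intro xS
  have hS0 : 0 < S := hS1
  have hSR : (0:ℝ) < (S:ℝ) := by exact_mod_cast hS0
  have hq2 : 1 < 2 / p := by rw [lt_div_iff₀ hp0]; linarith
  have hq1 : 1 < 1 / p := by rw [lt_div_iff₀ hp0]; linarith
  have hxk : ∀ k : Fin N, |x k| ≤ R * (((σ.symm k : ℕ) : ℝ) + 1) ^ (-(1/p)) := by
    intro k
    have := hcomp (σ.symm k)
    simpa using this
  set g : ℕ → Fin N → ℝ := fun j k => if ((σ.symm k : ℕ) / S = j + 1) then x k else 0 with hg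
  set T : ℕ → Finset (Fin N) :=
    fun j => Finset.univ.filter (fun k => (σ.symm k : ℕ) / S = j + 1) with hT
  -- decomposition into blocks
  have hdecomp : x - xS = ∑ j ∈ Finset.range N, g j := by
    funext k
    have hiN : (σ.symm k : ℕ) < N := (σ.symm k).isLt
    simp only [Finset.sum_apply, Pi.sub_apply, hg, xS]
    by_cases hk : (σ.symm k : ℕ) < S
    · rw [if_pos hk]
      have hz : ∀ j ∈ Finset.range N,
          (if (σ.symm k : ℕ) / S = j + 1 then x k else 0) = 0 := by
        intro j _
        rw [if_neg]
        have := Nat.div_eq_of_lt hk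
        omega
      rw [Finset.sum_congr rfl hz, Finset.sum_const_zero]
      ring
    · rw [if_neg hk]
      push_neg at hk
      have hm1 : 1 ≤ (σ.symm k : ℕ) / S := by
        rw [Nat.le_div_iff_mul_le hS0]
        omega
      have hdle := Nat.div_le_self (σ.symm k : ℕ) S
      have hmN : (σ.symm k : ℕ) / S - 1 ∈ Finset.range N := by
        rw [Finset.mem_range]; omega
      have hcongr : ∀ j ∈ Finset.range N,
          (if (σ.symm k : ℕ) / S = j + 1 then x k else 0)
            = (if j = (σ.symm k : ℕ) / S - 1 then x k else 0) := by
        intro j _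
        exact if_congr (by omega) rfl rfl
      rw [Finset.sum_congr rfl hcongr,
        Finset.sum_ite_eq' (Finset.range N) _ (fun _ => x k), if_pos hmN, sub_zero]
  -- support of blocks
  have hsupp : ∀ j, ∀ k, k ∉ T j → g j k = 0 := by
    intro j k hk
    simp only [hT, Finset.mem_filter, Finset.mem_univ, true_and] at hk
    simp only [hg]
    rw [if_neg hk]
  -- cardinality of blocks
  have hcard : ∀ j, (T j).card ≤ S := by
    intro j
    have h : (T j).card ≤ (Finset.range S).card := by
      apply Finset.card_le_card_of_injOn (fun k => (σ.symm k : ℕ) - (j+1) * S)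
      · intro k hk
        simp only [hT, Finset.mem_coe, Finset.mem_filter, Finset.mem_univ, true_and] at hk
        have lb : (j+1) * S ≤ (σ.symm k : ℕ) := by
          rw [← hk]; exact Nat.div_mul_le_self _ _
        have ub : (σ.symm k : ℕ) < (j+2) * S := by
          rw [← Nat.div_lt_iff_lt_mul hS0]; omega
        have hde : (j+2) * S = (j+1) * S + S := by ring
        simp only [Finset.mem_coe, Finset.mem_range]; omega
      · intro k1 h1 k2 h2 heq
        simp only [Finset.coe_filter, Set.mem_setOf_eq, Finset.mem_univ, true_and, hT] at h1 h2
        have lb1 : (j+1) * S ≤ (σ.symm k1 : ℕ) := by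
          rw [← h1]; exact Nat.div_mul_le_self _ _
        have lb2 : (j+1) * S ≤ (σ.symm k2 : ℕ) := by
          rw [← h2]; exact Nat.div_mul_le_self _ _
        have hval : (σ.symm k1 : ℕ) = (σ.symm k2 : ℕ) := by
          simp only at heq; omega
        have : σ.symm k1 = σ.symm k2 := Fin.ext hval
        exact σ.symm.injective this
    simpa using h
  -- RIP upper bound per block
  have hAg : ∀ j, l2 (A *ᵥ g j) ≤ Real.sqrt (1 + δ) * l2 (g j) := by
    intro j
    obtain ⟨-, h2⟩ := hRIP (T j) (hcard j) (g j) (hsupp j)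
    calc l2 (A *ᵥ g j) = Real.sqrt ((l2 (A *ᵥ g j))^2) :=
          (Real.sqrt_sq (l2_nonneg _)).symm
      _ ≤ Real.sqrt ((1+δ) * (l2 (g j))^2) := Real.sqrt_le_sqrt h2
      _ = Real.sqrt (1+δ) * l2 (g j) := by
          rw [Real.sqrt_mul (by linarith), Real.sqrt_sq (l2_nonneg _)]
  -- block bound for every j (used for j ≥ 1)
  have hblock : ∀ j : ℕ,
      l2 (g j) ≤ Real.sqrt S * (R * ((S:ℝ) * ((j:ℝ)+1)) ^ (-(1/p))) := by
    intro j
    have hbase : (0:ℝ) < (S:ℝ) * ((j:ℝ)+1) := by positivity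
    set c : ℝ := R * ((S:ℝ) * ((j:ℝ)+1)) ^ (-(1/p)) with hc
    have hc0 : 0 ≤ c := by positivity
    have hent : ∀ k ∈ T j, (g j k)^2 ≤ c^2 := by
      intro k hk
      simp only [hT, Finset.mem_filter, Finset.mem_univ, true_and] at hk
      have hgk : g j k = x k := by simp only [hg]; rw [if_pos hk]
      rw [hgk, ← sq_abs]
      apply pow_le_pow_left₀ (abs_nonneg _) _ 2
      calc |x k| ≤ R * (((σ.symm k : ℕ) : ℝ) + 1) ^ (-(1/p)) := hxk k
        _ ≤ c := by
            rw [hc]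
            apply mul_le_mul_of_nonneg_left _ hR.le
            apply Real.rpow_le_rpow_of_nonpos hbase _ (neg_nonpos.mpr (by positivity))
            have lb : (j+1) * S ≤ (σ.symm k : ℕ) := by
              rw [← hk]; exact Nat.div_mul_le_self _ _
            have : ((j+1) * S : ℝ) ≤ ((σ.symm k : ℕ) : ℝ) := by exact_mod_cast lb
            push_cast at this ⊢
            nlinarith
    have hsum : ∑ k, (g j k)^2 ≤ (S:ℝ) * c^2 := by
      have h1 : ∑ k, (g j k)^2 = ∑ k ∈ T j, (g j k)^2 := by
        symm
        apply Finset.sum_subset (Finset.subset_univ _)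
        intro k _ hk
        rw [hsupp j k hk]
        ring
      rw [h1]
      calc ∑ k ∈ T j, (g j k)^2 ≤ (T j).card • c^2 := Finset.sum_le_card_nsmul _ _ _ hent
        _ = ((T j).card : ℝ) * c^2 := nsmul_eq_mul _ _
        _ ≤ (S:ℝ) * c^2 := by
            apply mul_le_mul_of_nonneg_right _ (sq_nonneg c)
            exact_mod_cast hcard j
    calc l2 (g j) ≤ Real.sqrt ((S:ℝ) * c^2) := Real.sqrt_le_sqrt hsum
      _ = Real.sqrt S * c := by
          rw [Real.sqrt_mul (Nat.cast_nonneg S), Real.sqrt_sq hc0]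
  -- sharp ℓ² bound for block 0
  have hq2' : (0:ℝ) < 2/p - 1 := by linarith
  have h0 : l2 (g 0) ≤ R * (2/p - 1) ^ (-(1/2:ℝ)) * (S:ℝ) ^ ((1:ℝ)/2 - 1/p) := by
    set D : ℝ := R * (2/p - 1) ^ (-(1/2:ℝ)) * (S:ℝ) ^ ((1:ℝ)/2 - 1/p) with hD
    have hD0 : 0 ≤ D := by positivity
    have hDsq : D^2 = R^2 * ((S:ℝ) ^ (1 - 2/p) / (2/p - 1)) := by
      rw [hD, mul_pow, mul_pow,
        ← Real.rpow_natCast ((2/p-1) ^ (-(1/2:ℝ))) 2, ← Real.rpow_mul hq2'.le,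
        ← Real.rpow_natCast ((S:ℝ) ^ ((1:ℝ)/2 - 1/p)) 2, ← Real.rpow_mul hSR.le]
      norm_num
      rw [Real.rpow_neg_one]
      ring
    have hl2sq : (∑ k, (g 0 k)^2) ≤ R^2 * ((S:ℝ) ^ (1 - 2/p) / (2/p - 1)) := by
      have hre : ∑ k, (g 0 k)^2 = ∑ i : Fin N, (g 0 (σ i))^2 :=
        (Equiv.sum_comp σ (fun k => (g 0 k)^2)).symm
      rw [hre]
      have hpt : ∀ i : Fin N, (g 0 (σ i))^2
          ≤ (if S ≤ (i:ℕ) then R^2 * (((i:ℕ):ℝ)+1) ^ (-(2/p)) else 0) := by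
        intro i
        simp only [hg, Equiv.symm_apply_apply]
        by_cases hi : (i:ℕ)/S = 1
        · have hSi : S ≤ (i:ℕ) := by
            have : 1 ≤ (i:ℕ)/S := hi.ge
            rw [Nat.le_div_iff_mul_le hS0] at this
            omega
          rw [if_pos hi, if_pos hSi, ← sq_abs]
          have hb := hcomp i
          have h2 : (R * (((i:ℕ):ℝ)+1)^(-(1/p)))^2 = R^2 * (((i:ℕ):ℝ)+1) ^ (-(2/p)) := by
            rw [mul_pow]
            congr 1
            rw [← Real.rpow_natCast ((((i:ℕ):ℝ)+1)^(-(1/p))) 2,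
              ← Real.rpow_mul (by positivity)]
            congr 1
            push_cast
            ring
          rw [← h2]
          exact pow_le_pow_left₀ (abs_nonneg _) hb 2
        · rw [if_neg hi]
          have h00 : ((0:ℝ))^2 = 0 := by norm_num
          rw [h00]
          split
          · positivity
          · exact le_rfl
      calc ∑ i : Fin N, (g 0 (σ i))^2
          ≤ ∑ i : Fin N, (if S ≤ (i:ℕ) then R^2 * (((i:ℕ):ℝ)+1) ^ (-(2/p)) else 0) :=
            Finset.sum_le_sum (fun i _ => hpt i)
        _ = ∑ n ∈ Finset.range N, (if S ≤ n then R^2 * ((n:ℝ)+1) ^ (-(2/p)) else 0) :=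
            Fin.sum_univ_eq_sum_range (fun n => if S ≤ n then R^2 * ((n:ℝ)+1) ^ (-(2/p)) else 0) N
        _ = ∑ n ∈ Finset.Ico S N, R^2 * ((n:ℝ)+1) ^ (-(2/p)) := by
            rw [← Finset.sum_filter]
            congr 1
            ext n
            simp only [Finset.mem_filter, Finset.mem_range, Finset.mem_Ico]
            omega
        _ = R^2 * ∑ n ∈ Finset.Ico S N, ((n:ℝ)+1) ^ (-(2/p)) := by rw [Finset.mul_sum]
        _ ≤ R^2 * ((S:ℝ)^(1-2/p)/(2/p-1)) :=
            mul_le_mul_of_nonneg_left (tail_sum hq2 S N hS1) (sq_nonneg R)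
    calc l2 (g 0) ≤ Real.sqrt (R^2 * ((S:ℝ) ^ (1 - 2/p) / (2/p - 1))) :=
          Real.sqrt_le_sqrt hl2sq
      _ = Real.sqrt (D^2) := by rw [hDsq]
      _ = D := Real.sqrt_sq hD0
  -- sum over blocks j ≥ 1
  have hsum1 : ∑ j ∈ Finset.Ico 1 N, l2 (g j) ≤ R * (1/p - 1)⁻¹ * (S:ℝ) ^ ((1:ℝ)/2 - 1/p) := by
    have hC : (0:ℝ) < 1/p - 1 := by linarith
    calc ∑ j ∈ Finset.Ico 1 N, l2 (g j)
        ≤ ∑ j ∈ Finset.Ico 1 N, Real.sqrt S * (R * ((S:ℝ)*((j:ℝ)+1))^(-(1/p))) :=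
          Finset.sum_le_sum (fun j _ => hblock j)
      _ = Real.sqrt S * R * (S:ℝ)^(-(1/p)) * ∑ j ∈ Finset.Ico 1 N, ((j:ℝ)+1)^(-(1/p)) := by
          rw [Finset.mul_sum]
          apply Finset.sum_congr rfl
          intro j _
          rw [Real.mul_rpow hSR.le (by positivity)]
          ring
      _ ≤ Real.sqrt S * R * (S:ℝ)^(-(1/p)) * (((1:ℕ):ℝ)^(1 - 1/p)/(1/p - 1)) := by
          apply mul_le_mul_of_nonneg_left (tail_sum hq1 1 N le_rfl)
          positivity
      _ = R * (1/p - 1)⁻¹ * (S:ℝ)^((1:ℝ)/2 - 1/p) := by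
          have hmul : (S:ℝ)^((1:ℝ)/2) * (S:ℝ)^(-(1/p)) = (S:ℝ)^((1:ℝ)/2 - 1/p) := by
            rw [← Real.rpow_add hSR, sub_eq_add_neg]
          rw [Nat.cast_one, Real.one_rpow, Real.sqrt_eq_rpow, ← hmul]
          ring
  -- putting everything together
  have hNpos : 0 < N := by omega
  calc l2 (A *ᵥ (x - xS))
      = l2 (∑ j ∈ Finset.range N, A *ᵥ g j) := by
        rw [hdecomp]
        congr 1
        exact map_sum A.mulVecLin g (Finset.range N)
    _ ≤ ∑ j ∈ Finset.range N, l2 (A *ᵥ g j) := l2_sum_le _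
    _ ≤ ∑ j ∈ Finset.range N, Real.sqrt (1+δ) * l2 (g j) :=
        Finset.sum_le_sum (fun j _ => hAg j)
    _ = Real.sqrt (1+δ) * ∑ j ∈ Finset.range N, l2 (g j) := by rw [Finset.mul_sum]
    _ = Real.sqrt (1+δ) * (l2 (g 0) + ∑ j ∈ Finset.Ico 1 N, l2 (g j)) := by
        rw [Finset.range_eq_Ico, Finset.sum_eq_sum_Ico_succ_bot hNpos]
    _ ≤ Real.sqrt (1+δ) * (R * (2/p - 1) ^ (-(1/2:ℝ)) * (S:ℝ) ^ ((1:ℝ)/2 - 1/p)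
          + R * (1/p - 1)⁻¹ * (S:ℝ) ^ ((1:ℝ)/2 - 1/p)) :=
        mul_le_mul_of_nonneg_left (add_le_add h0 hsum1) (Real.sqrt_nonneg _)
    _ = Real.sqrt (1 + δ) * ((2 / p - 1) ^ (-(1 / 2 : ℝ)) + (1 / p - 1)⁻¹) * R *
        (S : ℝ) ^ ((1 : ℝ) / 2 - 1 / p) := by ring
end
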